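/- Let R be a ring and let C be a cochain complex of R-modules. Suppose there exists a bounded cochain complex B, all of whose terms are finitely generated projective R-modules, such that C and B become isomorphic in the derived category of R-modules. Then there exist a bounded cochain complex B' whose terms are finitely generated projective R-modules and a quasi-isomorphism of complexes B' ⟶ C. -/

import Mathlib

open CategoryTheory Limits

universe w u

open HomologicalComplex Pretriangulated in
/-- A chain map from a bounded complex of projectives to an acyclic complex is
null-homotopic. -/
lemma stmt11_nullHomotopy {R : Type u} [Ring R]
    {B A : CochainComplex (ModuleCat.{u} R) ℤ} (n m : ℤ)
    (hBup : ∀ i, n < i → IsZero (B.X i)) (hBlow : ∀ i, i < m → IsZero (B.X i))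
    (hproj : ∀ i, Projective (B.X i))
    (hA : ∀ i, A.ExactAt i) (g : B ⟶ A) : Nonempty (Homotopy g 0) := by
  have key : ∀ k : ℕ, ∃ H : ∀ i j : ℤ, B.X i ⟶ A.X j,
      (∀ i j : ℤ, j ≠ i - 1 → H i j = 0) ∧
      (∀ i : ℤ, n - k < i →
        g.f i = B.d i (i+1) ≫ H (i+1) i + H i (i-1) ≫ A.d (i-1) i) := by
    intro k
    induction k with
    | zero =>
      refine ⟨fun _ _ => 0, fun _ _ _ => rfl, fun i hi => ?_⟩
      exact (hBup i (by omega)).eq_of_src _ _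
    | succ k ih =>
      obtain ⟨H, hz, hP⟩ := ih
      obtain ⟨i₀, hi₀⟩ : ∃ z : ℤ, z = n - (k : ℤ) := ⟨_, rfl⟩
      replace hP : ∀ i : ℤ, i₀ < i →
          g.f i = B.d i (i+1) ≫ H (i+1) i + H i (i-1) ≫ A.d (i-1) i :=
        fun i hi => hP i (by omega)
      set u : B.X i₀ ⟶ A.X i₀ := g.f i₀ - B.d i₀ (i₀+1) ≫ H (i₀+1) i₀ with hu_def
      have hu : u ≫ A.d i₀ (i₀+1) = 0 := by
        have h1 := hP (i₀ + 1) (by omega)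
        rw [show i₀ + 1 - 1 = i₀ by omega] at h1
        have h2 : g.f i₀ ≫ A.d i₀ (i₀+1) = B.d i₀ (i₀+1) ≫ g.f (i₀+1) :=
          g.comm i₀ (i₀+1)
        rw [hu_def, Preadditive.sub_comp, Category.assoc, h2]
        rw [show H (i₀+1) i₀ ≫ A.d i₀ (i₀+1) =
            g.f (i₀+1) - B.d (i₀+1) (i₀+1+1) ≫ H (i₀+1+1) (i₀+1) by
          rw [h1]; abel]
        rw [Preadditive.comp_sub]
        rw [show B.d i₀ (i₀+1) ≫ B.d (i₀+1) (i₀+1+1) ≫ H (i₀+1+1) (i₀+1) = 0 by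
          rw [← Category.assoc, B.d_comp_d, zero_comp]]
        abel
      have hSexact : (A.sc' (i₀-1) i₀ (i₀+1)).Exact := by
        rw [← A.exactAt_iff' (i₀-1) i₀ (i₀+1)
          ((ComplexShape.up ℤ).prev_eq' (by simp only [ComplexShape.up_Rel]; omega))
          ((ComplexShape.up ℤ).next_eq' (by simp only [ComplexShape.up_Rel]))]
        exact hA i₀
      haveI := hproj i₀
      obtain ⟨h₀, hh₀⟩ : ∃ h₀ : B.X i₀ ⟶ A.X (i₀-1), h₀ ≫ A.d (i₀-1) i₀ = u :=
        ⟨hSexact.liftFromProjective u hu, hSexact.liftFromProjective_comp u hu⟩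
      refine ⟨fun i j => if h : i = i₀ ∧ j = i₀ - 1 then
          eqToHom (by rw [h.1]) ≫ h₀ ≫ eqToHom (by rw [h.2]) else H i j, ?_, ?_⟩
      · intro i j hij
        beta_reduce
        rw [dif_neg, hz i j hij]
        rintro ⟨rfl, rfl⟩
        omega
      · intro i hi
        beta_reduce
        by_cases hii : i = i₀
        · subst hii
          rw [dif_neg (by rintro ⟨h1, h2⟩; omega), dif_pos ⟨rfl, rfl⟩]
          simp only [eqToHom_refl, Category.comp_id, Category.id_comp]
          rw [hh₀, hu_def]
          abel
        · rw [dif_neg (by rintro ⟨h1, h2⟩; omega),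
            dif_neg (by rintro ⟨h1, h2⟩; exact hii h1)]
          exact hP i (by omega)
  obtain ⟨H, hz, hP⟩ := key (n - m + 1).toNat
  refine ⟨⟨H, fun i j hij => hz i j ?_, fun i => ?_⟩⟩
  · simp only [ComplexShape.up_Rel] at hij
    omega
  · by_cases hi : n - ((n - m + 1).toNat : ℤ) < i
    · have hPi := hP i hi
      rw [dNext_eq H (show (ComplexShape.up ℤ).Rel i (i+1) by
            simp only [ComplexShape.up_Rel]),
          prevD_eq H (show (ComplexShape.up ℤ).Rel (i-1) i by
            simp only [ComplexShape.up_Rel]; omega)]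
      simpa using hPi
    · exact (hBlow i (by omega)).eq_of_src _ _

/-- A cochain complex of `R`-modules which is isomorphic in the derived
category to a bounded complex of finitely generated projective modules admits a
quasi-isomorphism from such a complex. -/
theorem stmt11 (R : Type u) [Ring R]
    [HasDerivedCategory.{w} (ModuleCat.{u} R)]
    (C : CochainComplex (ModuleCat.{u} R) ℤ)
    (h : ∃ B : CochainComplex (ModuleCat.{u} R) ℤ,
      (∃ N : ℕ, ∀ i : ℤ, ((i : ℤ) < -(N : ℤ) ∨ (N : ℤ) < i) → IsZero (B.X i)) ∧
      (∀ i : ℤ, Module.Finite R (B.X i) ∧ Module.Projective R (B.X i)) ∧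
      Nonempty (DerivedCategory.Q.obj C ≅ DerivedCategory.Q.obj B)) :
    ∃ B' : CochainComplex (ModuleCat.{u} R) ℤ,
      (∃ N : ℕ, ∀ i : ℤ, ((i : ℤ) < -(N : ℤ) ∨ (N : ℤ) < i) → IsZero (B'.X i)) ∧
      (∀ i : ℤ, Module.Finite R (B'.X i) ∧ Module.Projective R (B'.X i)) ∧
      ∃ f : B' ⟶ C, QuasiIso f := by
  obtain ⟨B, ⟨N, hN⟩, hfg, ⟨e⟩⟩ := h
  haveI hproj : ∀ i, Projective (B.X i) := fun i =>
    (IsProjective.iff_projective.{u, u} (B.X i)).mp (hfg i).2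
  haveI : (HomotopyCategory.quasiIso (ModuleCat.{u} R)
      (ComplexShape.up ℤ)).HasRightCalculusOfFractions := by
    rw [HomotopyCategory.quasiIso_eq_subcategoryAcyclic_W]
    infer_instance
  let φ : DerivedCategory.Qh.obj
        ((HomotopyCategory.quotient (ModuleCat.{u} R) (ComplexShape.up ℤ)).obj B) ⟶
      DerivedCategory.Qh.obj
        ((HomotopyCategory.quotient (ModuleCat.{u} R) (ComplexShape.up ℤ)).obj C) :=
    (DerivedCategory.quotientCompQhIso (ModuleCat.{u} R)).hom.app B ≫ e.inv ≫
      (DerivedCategory.quotientCompQhIso (ModuleCat.{u} R)).inv.app C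
  haveI : IsIso φ := by
    dsimp only [φ]
    infer_instance
  obtain ⟨ρ, hρ⟩ := Localization.exists_rightFraction DerivedCategory.Qh
    (HomotopyCategory.quasiIso (ModuleCat.{u} R) (ComplexShape.up ℤ)) φ
  obtain ⟨Z, s, hs, f, rfl⟩ := ρ.cases
  have hsW := hs
  rw [HomotopyCategory.quasiIso_eq_subcategoryAcyclic_W,
    ObjectProperty.trW_iff] at hsW
  obtain ⟨Acy, gtr, htr, hdist, hAcy⟩ := hsW
  obtain ⟨A₀, rfl⟩ : ∃ A₀, (HomotopyCategory.quotient (ModuleCat.{u} R)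
      (ComplexShape.up ℤ)).obj A₀ = Acy := ⟨Acy.as, rfl⟩
  have hexact : ∀ i : ℤ, A₀.ExactAt i :=
    (HomotopyCategory.quotient_obj_mem_subcategoryAcyclic_iff_exactAt A₀).1 hAcy
  obtain ⟨g₀, rfl⟩ := (HomotopyCategory.quotient (ModuleCat.{u} R)
    (ComplexShape.up ℤ)).map_surjective gtr
  have hnull : Nonempty (Homotopy g₀ (0 : B ⟶ A₀)) :=
    stmt11_nullHomotopy (N : ℤ) (-(N : ℤ))
      (fun i hi => hN i (Or.inr hi)) (fun i hi => hN i (Or.inl hi)) hproj hexact g₀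
  have hgtr0 : (HomotopyCategory.quotient (ModuleCat.{u} R)
      (ComplexShape.up ℤ)).map g₀ = 0 := by
    rw [HomotopyCategory.eq_of_homotopy _ _ hnull.some, Functor.map_zero]
  obtain ⟨t, ht⟩ : ∃ t : (HomotopyCategory.quotient (ModuleCat.{u} R)
      (ComplexShape.up ℤ)).obj B ⟶ Z, 𝟙 _ = t ≫ s :=
    Pretriangulated.Triangle.coyoneda_exact₂ _ hdist (𝟙 _)
    (by simp [hgtr0]; exact comp_zero)
  have hψ : DerivedCategory.Qh.map (t ≫ f) = φ := by
    rw [hρ]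
    have h1 := MorphismProperty.RightFraction.map_s_comp_map
      (MorphismProperty.RightFraction.mk s hs f) DerivedCategory.Qh
      (Localization.inverts _ (HomotopyCategory.quasiIso (ModuleCat.{u} R)
        (ComplexShape.up ℤ)))
    dsimp at h1 ⊢
    rw [Functor.map_comp, ← h1, ← Functor.map_comp_assoc, ← ht, CategoryTheory.Functor.map_id,
      Category.id_comp]
  haveI : IsIso (DerivedCategory.Qh.map (t ≫ f)) := by
    rw [hψ]; infer_instance
  have hqis : HomotopyCategory.quasiIso (ModuleCat.{u} R) (ComplexShape.up ℤ)
      (t ≫ f) := by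
    intro n
    have hiso := NatIso.isIso_map_iff
      (DerivedCategory.homologyFunctorFactorsh (ModuleCat.{u} R) n) (t ≫ f)
    dsimp at hiso
    rw [← hiso]
    infer_instance
  obtain ⟨ψ₀, hψ₀⟩ := (HomotopyCategory.quotient (ModuleCat.{u} R)
    (ComplexShape.up ℤ)).map_surjective (t ≫ f)
  have hq : HomologicalComplex.quasiIso (ModuleCat.{u} R) (ComplexShape.up ℤ) ψ₀ := by
    rw [← HomotopyCategory.quotient_map_mem_quasiIso_iff, hψ₀]
    exact hqis
  rw [HomologicalComplex.mem_quasiIso_iff] at hq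
  exact ⟨B, ⟨N, hN⟩, hfg, ψ₀, hq⟩
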